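/- The Δ-robustness of coherence on qubit states is discontinuous: define f on qubit density matrices by f(ρ) = |ρ₀₁|/√(ρ₀₀ ρ₁₁) if ρ₀₀ ρ₁₁ > 0 and f(ρ) = 0 otherwise. For every ε ∈ (0, 1), the pure state |ψ_ε⟩ = √(1−ε)|0⟩ + √ε|1⟩ satisfies f(|ψ_ε⟩⟨ψ_ε|) = 1, while |ψ_ε⟩⟨ψ_ε| → |0⟩⟨0| in trace norm as ε → 0 and f(|0⟩⟨0|) = 0; hence f is not continuous with respect to the trace norm. -/

import Mathlib

open scoped Matrix Kronecker ComplexOrder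

noncomputable section

/-- A density matrix: positive semidefinite with unit trace. -/
def IsDensityMatrix {ι : Type*} [Fintype ι] (ρ : Matrix ι ι ℂ) : Prop :=
  ρ.PosSemidef ∧ ρ.trace = 1

/-- The positive semidefinite square root (as in the older Mathlib's `Matrix.PosSemidef.sqrt`). -/
noncomputable def Matrix.PosSemidef.sqrt {n : Type*} [Fintype n] [DecidableEq n]
    {A : Matrix n n ℂ} (hA : A.PosSemidef) : Matrix n n ℂ :=
  (hA.1.eigenvectorUnitary : Matrix n n ℂ) * Matrix.diagonal ((↑) ∘ (Real.sqrt ·) ∘ hA.1.eigenvalues) *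
  (star hA.1.eigenvectorUnitary : Matrix n n ℂ)

/-- The trace norm `‖M‖₁ = Tr √(M† M)`. -/
noncomputable def traceNorm {ι : Type*} [Fintype ι] [DecidableEq ι]
    (M : Matrix ι ι ℂ) : ℝ :=
  ((Matrix.posSemidef_conjTranspose_mul_self M).sqrt.trace).re

/-- The amplification `Λ ⊗ id_k` of a linear map on matrices. -/
def amplify {ι : Type*} [Fintype ι] [DecidableEq ι]
    (Λ : Matrix ι ι ℂ →ₗ[ℂ] Matrix ι ι ℂ) (k : ℕ)
    (M : Matrix (ι × Fin k) (ι × Fin k) ℂ) : Matrix (ι × Fin k) (ι × Fin k) ℂ :=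
  Matrix.of fun p q => Λ (Matrix.of fun i j => M (i, p.2) (j, q.2)) p.1 q.1

/-- A linear map on matrices is CPTP (a quantum channel) if all its amplifications
preserve positive semidefiniteness and it preserves the trace. -/
def IsCPTP {ι : Type*} [Fintype ι] [DecidableEq ι]
    (Λ : Matrix ι ι ℂ →ₗ[ℂ] Matrix ι ι ℂ) : Prop :=
  (∀ (k : ℕ) (M : Matrix (ι × Fin k) (ι × Fin k) ℂ),
      M.PosSemidef → (amplify Λ k M).PosSemidef) ∧
  (∀ M, (Λ M).trace = M.trace)

/-- A quantum channel on a `d`-dimensional system. -/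
structure QChannel (d : ℕ) where
  toFun : Matrix (Fin d) (Fin d) ℂ →ₗ[ℂ] Matrix (Fin d) (Fin d) ℂ
  cptp : IsCPTP toFun

/-- A resource theory: a convex compact set `F` of free states and a set `O` of free
operations containing the identity, closed under composition, preserving `F`, and
containing the state-preparation channel `ρ ↦ Tr(ρ)σ` for every free `σ`. -/
structure ResourceTheory (d : ℕ) where
  F : Set (Matrix (Fin d) (Fin d) ℂ)
  O : Set (QChannel d)
  F_density : ∀ σ ∈ F, IsDensityMatrix σ
  F_convex : Convex ℝ F
  F_compact : IsCompact F
  id_mem : ∃ Λ ∈ O, ∀ ρ, Λ.toFun ρ = ρ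
  comp_mem : ∀ Λ₁ ∈ O, ∀ Λ₂ ∈ O, ∃ Λ ∈ O, ∀ ρ, Λ.toFun ρ = Λ₂.toFun (Λ₁.toFun ρ)
  free_mapsto : ∀ Λ ∈ O, ∀ σ ∈ F, Λ.toFun σ ∈ F
  prep_mem : ∀ σ ∈ F, ∃ Λ ∈ O, ∀ ρ : Matrix (Fin d) (Fin d) ℂ, Λ.toFun ρ = ρ.trace • σ

/-- `ρ → σ`: for every `ε > 0` some free operation maps `ρ` within trace-distance `ε` of `σ`. -/
def Converts {d : ℕ} (RT : ResourceTheory d) (ρ σ : Matrix (Fin d) (Fin d) ℂ) : Prop :=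
  ∀ ε > 0, ∃ Λ ∈ RT.O, traceNorm (Λ.toFun ρ - σ) < ε

/-- A resource monotone: nonnegative on states, nonincreasing under free operations,
vanishing on free states. -/
def IsMonotone {d : ℕ} (RT : ResourceTheory d) (R : Matrix (Fin d) (Fin d) ℂ → ℝ) : Prop :=
  (∀ ρ, IsDensityMatrix ρ → 0 ≤ R ρ) ∧
  (∀ ρ, IsDensityMatrix ρ → ∀ Λ ∈ RT.O, R (Λ.toFun ρ) ≤ R ρ) ∧
  (∀ σ ∈ RT.F, R σ = 0)

/-- The pure state `|ψ⟩⟨ψ|`. -/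
def pureState {ι : Type*} (ψ : ι → ℂ) : Matrix ι ι ℂ :=
  Matrix.vecMulVec ψ (star ψ)

/-- `ψ` is a unit vector. -/
def IsUnitVec {ι : Type*} [Fintype ι] (ψ : ι → ℂ) : Prop :=
  ∑ i, Complex.normSq (ψ i) = 1

/-- Trace-norm distance from `ρ` to a set of states. -/
noncomputable def distToSet {ι : Type*} [Fintype ι] [DecidableEq ι]
    (F : Set (Matrix ι ι ℂ)) (ρ : Matrix ι ι ℂ) : ℝ :=
  sInf ((fun μ => traceNorm (ρ - μ)) '' F)


/-- The single-qubit Δ-robustness of coherence: `|ρ₀₁|/√(ρ₀₀ρ₁₁)` when `ρ₀₀ρ₁₁ > 0`,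
and `0` otherwise (in particular `0` on incoherent states). -/
noncomputable def deltaRobustness (ρ : Matrix (Fin 2) (Fin 2) ℂ) : ℝ :=
  if 0 < (ρ 0 0).re * (ρ 1 1).re then
    ‖ρ 0 1‖ / Real.sqrt ((ρ 0 0).re * (ρ 1 1).re)
  else 0

/-- The pure state vector `|ψ_ε⟩ = √(1−ε)|0⟩ + √ε|1⟩`. -/
noncomputable def psiVec (ε : ℝ) : Fin 2 → ℂ :=
  ![(Real.sqrt (1 - ε) : ℂ), (Real.sqrt ε : ℂ)]

/-- The basis vector `|0⟩`. -/
def ketZero : Fin 2 → ℂ := ![1, 0]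

/-- Continuity with respect to the trace norm, on density matrices. -/
def TraceNormContinuous (R : Matrix (Fin 2) (Fin 2) ℂ → ℝ) : Prop :=
  ∀ ρ, IsDensityMatrix ρ → ∀ ε > 0, ∃ δ > 0, ∀ σ, IsDensityMatrix σ →
    traceNorm (ρ - σ) < δ → |R ρ - R σ| < ε

/-- auxiliary: pure states are positive semidefinite -/
lemma posSemidef_pureState {ι : Type*} [Fintype ι] (ψ : ι → ℂ) :
    (pureState ψ).PosSemidef := by
  constructor
  · ext i j
    simp [pureState, Matrix.vecMulVec_apply, Matrix.conjTranspose_apply, mul_comm]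
  · intro x
    exact (Matrix.posSemidef_vecMulVec_self_star ψ).2 x

lemma traceNorm_of_sq (c : ℝ) (hc : 0 ≤ c) (A : Matrix (Fin 2) (Fin 2) ℂ)
    (h : Aᴴ * A = (c : ℂ) • 1) : traceNorm A = 2 * Real.sqrt c := by
  have hP : ((Real.sqrt c : ℂ) • (1 : Matrix (Fin 2) (Fin 2) ℂ)).PosSemidef := by
    have hd : ((Real.sqrt c : ℂ) • (1 : Matrix (Fin 2) (Fin 2) ℂ))
        = Matrix.diagonal (fun _ => (Real.sqrt c : ℂ)) := by
      ext i j
      rcases eq_or_ne i j with rfl | hij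
      · simp
      · simp [Matrix.one_apply_ne hij, Matrix.diagonal_apply_ne _ hij]
    rw [hd, Matrix.posSemidef_diagonal_iff]
    intro i
    rw [Complex.zero_le_real]
    exact Real.sqrt_nonneg c
  have hsq : ((Real.sqrt c : ℂ) • (1 : Matrix (Fin 2) (Fin 2) ℂ)) ^ 2 = Aᴴ * A := by
    rw [h, smul_pow, one_pow, ← Complex.ofReal_pow, Real.sq_sqrt hc]
  have he : ∀ (B : Matrix (Fin 2) (Fin 2) ℂ) (hB : B.IsHermitian), B = (c : ℂ) • 1 →
      ∀ i, hB.eigenvalues i = c := by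
    intro B hB hBc i
    subst hBc
    have hU := hB.conjStarAlgAut_star_eigenvectorUnitary
    have := congrFun (congrFun hU i) i
    simp [Unitary.conjStarAlgAut_apply] at this
    exact_mod_cast this.symm
  have he' := he _ (Matrix.posSemidef_conjTranspose_mul_self A).1 h
  unfold traceNorm Matrix.PosSemidef.sqrt
  rw [Matrix.trace_mul_comm, ← mul_assoc, Unitary.coe_star_mul_self, one_mul,
    Matrix.trace_diagonal, Fin.sum_univ_two]
  simp [he']
  ring

lemma diff_sq {ε : ℝ} (hε : ε ∈ Set.Ioo (0:ℝ) 1) :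
    (pureState (psiVec ε) - pureState ketZero)ᴴ * (pureState (psiVec ε) - pureState ketZero)
      = (ε : ℂ) • 1 := by
  obtain ⟨h0, h1⟩ := hε
  have ha : (Real.sqrt (1 - ε) : ℂ) * (Real.sqrt (1 - ε) : ℂ) = 1 - (ε : ℂ) := by
    rw [← Complex.ofReal_mul, Real.mul_self_sqrt (by linarith)]; push_cast; ring
  have hb : (Real.sqrt ε : ℂ) * (Real.sqrt ε : ℂ) = (ε : ℂ) := by
    rw [← Complex.ofReal_mul, Real.mul_self_sqrt h0.le]
  ext i j
  fin_cases i <;> fin_cases j <;>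
    simp [pureState, psiVec, ketZero, Matrix.mul_apply, Fin.sum_univ_two,
      Matrix.vecMulVec_apply, Matrix.conjTranspose_apply, Matrix.one_apply,
      Matrix.sub_apply, Complex.conj_ofReal, -Matrix.vecMulVec_cons, -Matrix.cons_vecMulVec,
        -Matrix.empty_vecMulVec]
  · linear_combination ((Real.sqrt (1 - ε) : ℂ)^2 + (Real.sqrt ε : ℂ)^2 - 1 - (ε:ℂ)) * ha
      + (1 - (ε:ℂ)) * hb
  · linear_combination ((Real.sqrt (1 - ε) : ℂ)*(Real.sqrt ε : ℂ)) * ha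
      + ((Real.sqrt (1 - ε) : ℂ)*(Real.sqrt ε : ℂ)) * hb
  · linear_combination ((Real.sqrt (1 - ε) : ℂ)*(Real.sqrt ε : ℂ)) * ha
      + ((Real.sqrt (1 - ε) : ℂ)*(Real.sqrt ε : ℂ)) * hb
  · linear_combination ((Real.sqrt ε : ℂ)^2) * ha + (1 + (Real.sqrt ε : ℂ)^2) * hb

lemma traceNorm_diff {ε : ℝ} (hε : ε ∈ Set.Ioo (0:ℝ) 1) :
    traceNorm (pureState (psiVec ε) - pureState ketZero) = 2 * Real.sqrt ε :=
  traceNorm_of_sq ε hε.1.le _ (diff_sq hε)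

lemma traceNorm_diff' {ε : ℝ} (hε : ε ∈ Set.Ioo (0:ℝ) 1) :
    traceNorm (pureState ketZero - pureState (psiVec ε)) = 2 * Real.sqrt ε := by
  apply traceNorm_of_sq ε hε.1.le
  have : pureState ketZero - pureState (psiVec ε) = -(pureState (psiVec ε) - pureState ketZero) :=
    (neg_sub _ _).symm
  rw [this, Matrix.conjTranspose_neg, neg_mul_neg]
  exact diff_sq hε

lemma psi_entries {ε : ℝ} (hε : ε ∈ Set.Ioo (0:ℝ) 1) :
    ((pureState (psiVec ε)) 0 0).re = 1 - ε ∧ ((pureState (psiVec ε)) 1 1).re = ε ∧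
    (pureState (psiVec ε)) 0 1 = ((Real.sqrt (1 - ε) * Real.sqrt ε : ℝ) : ℂ) := by
  obtain ⟨h0, h1⟩ := hε
  refine ⟨?_, ?_, ?_⟩ <;>
    simp [pureState, psiVec, Matrix.vecMulVec_apply, Complex.conj_ofReal,
      ← Complex.ofReal_mul, Real.mul_self_sqrt (show (0:ℝ) ≤ 1 - ε by linarith),
      Real.mul_self_sqrt h0.le]

lemma psi_robustness {ε : ℝ} (hε : ε ∈ Set.Ioo (0:ℝ) 1) :
    deltaRobustness (pureState (psiVec ε)) = 1 := by
  obtain ⟨e00, e11, e01⟩ := psi_entries hε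
  obtain ⟨h0, h1⟩ := hε
  have hpos : 0 < (1 - ε) * ε := by nlinarith
  have hsp : 0 < Real.sqrt (1 - ε) * Real.sqrt ε := by
    apply mul_pos <;> exact Real.sqrt_pos.mpr (by linarith)
  rw [deltaRobustness, e00, e11, e01, if_pos hpos, Complex.norm_real, Real.norm_eq_abs,
    abs_of_pos hsp, Real.sqrt_mul (by linarith) ε]
  exact div_self hsp.ne'

lemma psi_density {ε : ℝ} (hε : ε ∈ Set.Ioo (0:ℝ) 1) :
    IsDensityMatrix (pureState (psiVec ε)) := by
  obtain ⟨h0, h1⟩ := hε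
  refine ⟨posSemidef_pureState _, ?_⟩
  have ha : (Real.sqrt (1 - ε) : ℂ) * (Real.sqrt (1 - ε) : ℂ) = 1 - (ε : ℂ) := by
    rw [← Complex.ofReal_mul, Real.mul_self_sqrt (by linarith)]; push_cast; ring
  have hb : (Real.sqrt ε : ℂ) * (Real.sqrt ε : ℂ) = (ε : ℂ) := by
    rw [← Complex.ofReal_mul, Real.mul_self_sqrt h0.le]
  simp [Matrix.trace, Matrix.diag, pureState, psiVec, Matrix.vecMulVec_apply,
    Fin.sum_univ_two, Complex.conj_ofReal]
  linear_combination ha + hb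

lemma ketZero_density : IsDensityMatrix (pureState ketZero) := by
  refine ⟨posSemidef_pureState _, ?_⟩
  simp [Matrix.trace, Matrix.diag, pureState, ketZero, Matrix.vecMulVec_apply,
    Fin.sum_univ_two]

lemma ketZero_robustness : deltaRobustness (pureState ketZero) = 0 := by
  rw [deltaRobustness, if_neg]
  simp [pureState, ketZero, Matrix.vecMulVec_apply]

/-- The Δ-robustness of coherence is discontinuous on qubit states:
`f(|ψ_ε⟩⟨ψ_ε|) = 1` for all `ε ∈ (0,1)`, while `|ψ_ε⟩⟨ψ_ε| → |0⟩⟨0|` in trace norm as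
`ε → 0` and `f(|0⟩⟨0|) = 0`; hence `f` is not trace-norm continuous. -/
theorem deltaRobustness_discontinuous :
    (∀ ε : ℝ, ε ∈ Set.Ioo (0 : ℝ) 1 → deltaRobustness (pureState (psiVec ε)) = 1) ∧
    Filter.Tendsto (fun ε : ℝ => traceNorm (pureState (psiVec ε) - pureState ketZero))
      (nhdsWithin 0 (Set.Ioo (0 : ℝ) 1)) (nhds 0) ∧
    deltaRobustness (pureState ketZero) = 0 ∧
    ¬ TraceNormContinuous deltaRobustness := by
  refine ⟨fun ε hε => psi_robustness hε, ?_, ketZero_robustness, ?_⟩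
  · have h2 : Filter.Tendsto (fun ε : ℝ => 2 * Real.sqrt ε) (nhdsWithin 0 (Set.Ioo (0:ℝ) 1))
        (nhds 0) := by
      have := (Real.continuous_sqrt.tendsto' 0 0 Real.sqrt_zero).const_mul 2
      simpa using this.mono_left nhdsWithin_le_nhds
    refine h2.congr' ?_
    filter_upwards [self_mem_nhdsWithin] with ε hε
    exact (traceNorm_diff hε).symm
  · intro hcont
    obtain ⟨δ, hδ, hδ'⟩ := hcont (pureState ketZero) ketZero_density 1 one_pos
    set ε : ℝ := min (δ^2/8) (1/2) with hεdef
    have hε : ε ∈ Set.Ioo (0:ℝ) 1 := by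
      constructor
      · apply lt_min (by positivity) (by norm_num)
      · exact lt_of_le_of_lt (min_le_right _ _) (by norm_num)
    have hlt : traceNorm (pureState ketZero - pureState (psiVec ε)) < δ := by
      rw [traceNorm_diff' hε]
      have h1 : ε < δ^2 / 4 := lt_of_le_of_lt (min_le_left _ _) (by nlinarith)
      have h2 : Real.sqrt ε < δ / 2 := by
        rw [show δ / 2 = Real.sqrt ((δ/2)^2) from (Real.sqrt_sq (by linarith)).symm]
        exact Real.sqrt_lt_sqrt hε.1.le (by nlinarith)
      linarith
    have := hδ' (pureState (psiVec ε)) (psi_density hε) hlt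
    rw [ketZero_robustness, psi_robustness hε] at this
    norm_num at this
end
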